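/- If an infinite word w over Σ satisfies φ(w_t) = true and ψ(w_t) = false for all t from some point T on and only finitely many positions satisfy ¬φ ∨ ψ, then w has exactly two infinite runs β¹ and β² through the SU-automaton, and there exists T' ∈ ℕ such that β¹_j = β²_j for all j < T', while β¹_t = 1 and β²_t = 0 for all t ≥ T' (i.e., the runs are of the form ξ·1^ω and ξ·0^ω with the same finite prefix ξ). -/

import Mathlib

/-- Transition relation of the SU-automaton (the standard-translation automaton
for a strong-until formula) over alphabet `A`, with propositional formulas
`ψ φ : A → Bool`: `(s, σ, s') ∈ R` iff `s = 1 ↔ (ψ σ ∨ (φ σ ∧ s' = 1))`.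
Both states are initial. -/
def suR {A : Type} (ψ φ : A → Bool) (s : Fin 2) (σ : A) (s' : Fin 2) : Prop :=
  s = 1 ↔ (ψ σ = true ∨ (φ σ = true ∧ s' = 1))

/-- `β` is an (infinite) run of the word `w` through the SU-automaton. -/
def IsSuRun {A : Type} (ψ φ : A → Bool) (w : ℕ → A) (β : ℕ → Fin 2) : Prop :=
  ∀ t, suR ψ φ (β t) (w t) (β (t + 1))

/- ==== auxiliary material ==== -/

lemma fin2_cases (a : Fin 2) : a = 0 ∨ a = 1 := by omega

lemma fin2_ne_one (a : Fin 2) (h : a ≠ 1) : a = 0 := by omega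

lemma fin2_of_iff (a b : Fin 2) (h : a = 1 ↔ b = 1) : a = b := by
  rcases fin2_cases a with ha | ha <;> rcases fin2_cases b with hb | hb <;> simp_all

/-- The unique predecessor state determined by the letter and successor state. -/
def suStep {A : Type} (ψ φ : A → Bool) (σ : A) (s' : Fin 2) : Fin 2 :=
  if ψ σ = true ∨ (φ σ = true ∧ s' = 1) then 1 else 0

lemma suStep_spec {A : Type} (ψ φ : A → Bool) (σ : A) (s' : Fin 2) :
    suR ψ φ (suStep ψ φ σ s') σ s' := by
  unfold suR suStep
  split <;> simp_all

lemma suR_unique {A : Type} (ψ φ : A → Bool) (σ : A) (s s' : Fin 2)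
    (h : suR ψ φ s σ s') : s = suStep ψ φ σ s' := by
  apply fin2_of_iff
  unfold suR at h
  rw [h]
  have h2 := suStep_spec ψ φ σ s'
  unfold suR at h2
  rw [h2]

/-- backwards computation of the run prefix: value at time `T - k`, tail `c`. -/
def suBack {A : Type} (ψ φ : A → Bool) (w : ℕ → A) (T : ℕ) (c : Fin 2) : ℕ → Fin 2
  | 0 => c
  | (k+1) => suStep ψ φ (w (T - (k+1))) (suBack ψ φ w T c k)

/-- the run with tail value `c` from time `T` on. -/
def suRunOf {A : Type} (ψ φ : A → Bool) (w : ℕ → A) (T : ℕ) (c : Fin 2) (t : ℕ) : Fin 2 :=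
  if T ≤ t then c else suBack ψ φ w T c (T - t)

lemma suRunOf_isRun {A : Type} (ψ φ : A → Bool) (w : ℕ → A) (T : ℕ) (c : Fin 2)
    (hT : ∀ t, T ≤ t → φ (w t) = true ∧ ψ (w t) = false) :
    IsSuRun ψ φ w (suRunOf ψ φ w T c) := by
  intro t
  rcases le_or_gt T t with ht | ht
  · have h1 : suRunOf ψ φ w T c t = c := by simp [suRunOf, ht]
    have h2 : suRunOf ψ φ w T c (t+1) = c := by simp [suRunOf, le_trans ht (Nat.le_succ t)]
    rw [h1, h2]
    obtain ⟨hφ, hψ⟩ := hT t ht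
    unfold suR
    simp [hφ, hψ]
  · obtain ⟨m, hm⟩ : ∃ m, T - t = m + 1 := ⟨T - t - 1, by omega⟩
    have ht' : T - (m + 1) = t := by omega
    have h1 : suRunOf ψ φ w T c t = suStep ψ φ (w t) (suBack ψ φ w T c m) := by
      simp only [suRunOf, if_neg (not_le.mpr ht), hm, suBack, ht']
    have h2 : suRunOf ψ φ w T c (t+1) = suBack ψ φ w T c m := by
      rcases le_or_gt T (t+1) with ht2 | ht2
      · have hm0 : m = 0 := by omega
        subst hm0
        simp [suRunOf, ht2, suBack]
      · have hmm : T - (t+1) = m := by omega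
        simp [suRunOf, not_le.mpr ht2, hmm]
    rw [h1, h2]
    exact suStep_spec ψ φ (w t) _

lemma run_const_after {A : Type} (ψ φ : A → Bool) (w : ℕ → A) (T : ℕ)
    (hT : ∀ t, T ≤ t → φ (w t) = true ∧ ψ (w t) = false)
    (β : ℕ → Fin 2) (hβ : IsSuRun ψ φ w β) :
    ∀ t, T ≤ t → β t = β T := by
  have key : ∀ k, β (T + k) = β T := by
    intro k
    induction k with
    | zero => rfl
    | succ k ih =>
      have hr := hβ (T + k)
      obtain ⟨hφ, hψ⟩ := hT (T + k) (Nat.le_add_right T k)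
      unfold suR at hr
      simp [hφ, hψ] at hr
      have : β (T + k) = β (T + k + 1) := fin2_of_iff _ _ hr
      rw [← Nat.add_assoc] at *
      rw [← this, ih]
  intro t ht
  have : t = T + (t - T) := by omega
  rw [this, key]

lemma run_eq_suRunOf {A : Type} (ψ φ : A → Bool) (w : ℕ → A) (T : ℕ)
    (hT : ∀ t, T ≤ t → φ (w t) = true ∧ ψ (w t) = false)
    (β : ℕ → Fin 2) (hβ : IsSuRun ψ φ w β) :
    β = suRunOf ψ φ w T (β T) := by
  have back : ∀ k, k ≤ T → β (T - k) = suBack ψ φ w T (β T) k := by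
    intro k
    induction k with
    | zero => simp [suBack]
    | succ k ih =>
      intro hk
      have hk' : k ≤ T := by omega
      have hsucc : T - (k+1) + 1 = T - k := by omega
      have hr := hβ (T - (k+1))
      rw [hsucc] at hr
      have := suR_unique ψ φ (w (T - (k+1))) _ _ hr
      rw [this, suBack, ih hk']
  funext t
  rcases le_or_gt T t with ht | ht
  · rw [run_const_after ψ φ w T hT β hβ t ht]
    simp [suRunOf, ht]
  · have h1 : suRunOf ψ φ w T (β T) t = suBack ψ φ w T (β T) (T - t) := by
      simp [suRunOf, not_le.mpr ht]
    have h2 : T - (T - t) = t := by omega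
    rw [h1, ← back (T - t) (by omega), h2]

lemma propagate {A : Type} (ψ φ : A → Bool) (w : ℕ → A)
    (β₁ β₂ : ℕ → Fin 2) (h₁ : IsSuRun ψ φ w β₁) (h₂ : IsSuRun ψ φ w β₂)
    (t : ℕ) (ha : β₁ t = 1) (hb : β₂ t = 0) : β₁ (t+1) = 1 ∧ β₂ (t+1) = 0 := by
  have hr₁ := h₁ t
  have hr₂ := h₂ t
  unfold suR at hr₁ hr₂
  rw [ha] at hr₁
  rw [hb] at hr₂
  simp only [true_iff] at hr₁
  have hne : (0 : Fin 2) ≠ 1 := by decide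
  simp only [hne, false_iff] at hr₂
  push_neg at hr₂
  obtain ⟨hψ, hφ2⟩ := hr₂
  rcases hr₁ with hψ' | ⟨hφ, hb1⟩
  · exact absurd hψ' hψ
  · exact ⟨hb1, fin2_ne_one _ (hφ2 hφ)⟩

lemma propagate_many {A : Type} (ψ φ : A → Bool) (w : ℕ → A)
    (β₁ β₂ : ℕ → Fin 2) (h₁ : IsSuRun ψ φ w β₁) (h₂ : IsSuRun ψ φ w β₂)
    (t : ℕ) (ha : β₁ t = 1) (hb : β₂ t = 0) :
    ∀ s, t ≤ s → β₁ s = 1 ∧ β₂ s = 0 := by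
  have key : ∀ k, β₁ (t + k) = 1 ∧ β₂ (t + k) = 0 := by
    intro k
    induction k with
    | zero => exact ⟨ha, hb⟩
    | succ k ih =>
      rw [← Nat.add_assoc]
      exact propagate ψ φ w β₁ β₂ h₁ h₂ (t + k) ih.1 ih.2
  intro s hs
  have : s = t + (s - t) := by omega
  rw [this]
  exact key (s - t)

/-- if from some point `T` on every position satisfies `φ ∧ ¬ψ`
(equivalently, only finitely many positions satisfy `¬φ ∨ ψ`), then the word has
exactly two infinite runs through the SU-automaton, and they share a common
finite prefix and then stay forever in states `1` and `0`, respectively. -/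
theorem suAutomaton_two_runs {A : Type} (ψ φ : A → Bool) (w : ℕ → A)
    (h : ∃ T, ∀ t, T ≤ t → φ (w t) = true ∧ ψ (w t) = false)
    (hfin : {t | ¬(φ (w t) = true) ∨ ψ (w t) = true}.Finite) :
    ∃ β₁ β₂ : ℕ → Fin 2,
      IsSuRun ψ φ w β₁ ∧ IsSuRun ψ φ w β₂ ∧ β₁ ≠ β₂ ∧
      (∀ β : ℕ → Fin 2, IsSuRun ψ φ w β → β = β₁ ∨ β = β₂) ∧
      ∃ T' : ℕ, (∀ j, j < T' → β₁ j = β₂ j) ∧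
        ∀ t, T' ≤ t → β₁ t = 1 ∧ β₂ t = 0 := by
  obtain ⟨T, hT⟩ := h
  set β₁ := suRunOf ψ φ w T 1 with hβ₁def
  set β₂ := suRunOf ψ φ w T 0 with hβ₂def
  have run₁ : IsSuRun ψ φ w β₁ := suRunOf_isRun ψ φ w T 1 hT
  have run₂ : IsSuRun ψ φ w β₂ := suRunOf_isRun ψ φ w T 0 hT
  have hb1T : β₁ T = 1 := by simp [hβ₁def, suRunOf]
  have hb2T : β₂ T = 0 := by simp [hβ₂def, suRunOf]
  have hneT : β₁ T ≠ β₂ T := by rw [hb1T, hb2T]; decide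
  refine ⟨β₁, β₂, run₁, run₂, ?_, ?_, ?_⟩
  · intro hcontra
    exact hneT (by rw [hcontra])
  · intro β hβ
    have := run_eq_suRunOf ψ φ w T hT β hβ
    rcases fin2_cases (β T) with hc | hc
    · right; rw [this, hc]
    · left; rw [this, hc]
  · have hex : ∃ t, β₁ t ≠ β₂ t := ⟨T, hneT⟩
    set T' := Nat.find hex with hT'def
    have hdiff : β₁ T' ≠ β₂ T' := Nat.find_spec hex
    have hT'le : T' ≤ T := Nat.find_le hneT
    have h10 : β₁ T' = 1 ∧ β₂ T' = 0 := by
      rcases fin2_cases (β₁ T') with ha | ha <;> rcases fin2_cases (β₂ T') with hb | hb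
      · exact absurd (ha.trans hb.symm) hdiff
      · -- β₁ T' = 0, β₂ T' = 1 : propagate to T, contradiction
        exfalso
        have := (propagate_many ψ φ w β₂ β₁ run₂ run₁ T' hb ha T hT'le).2
        rw [hb1T] at this
        exact absurd this (by decide)
      · exact ⟨ha, hb⟩
      · exact absurd (ha.trans hb.symm) hdiff
    refine ⟨T', ?_, ?_⟩
    · intro j hj
      by_contra hne
      exact absurd hj (not_lt.mpr (Nat.find_le hne))
    · exact propagate_many ψ φ w β₁ β₂ run₁ run₂ T' h10.1 h10.2
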